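/- Fix n ≥ 2 and r > 0, and let S₀ ⊆ ℝⁿ be the regular simplex with inscribed ball B(0,r). Suppose that for every monotone decreasing positive function ρ : [0,∞) → (0,∞) with ∫_{ℝⁿ} ρ(‖x‖) dx < ∞ (with associated measure μ_ρ of density ρ(‖x‖)) and every simplex S containing B(0,r) that is a local minimizer of S ↦ μ_ρ(S) among simplices containing B(0,r) (local with respect to the Hausdorff distance), one has μ_ρ(S) ≥ μ_ρ(S₀). Then for every such ρ and every simplex S containing B(0,r), μ_ρ(S) ≥ μ_ρ(S₀). -/

import Mathlib

open MeasureTheory Real Metric Set Filter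
open scoped InnerProductSpace ENNReal Topology

/-- A simplex in `ℝⁿ`: the convex hull of `n+1` affinely independent points. -/
def IsSimplex {n : ℕ} (S : Set (EuclideanSpace ℝ (Fin n))) : Prop :=
  ∃ p : Fin (n + 1) → EuclideanSpace ℝ (Fin n),
    AffineIndependent ℝ p ∧ S = convexHull ℝ (Set.range p)

/-- A regular simplex with inscribed ball `B(0,r)`:
`{x : ⟪x,u_i⟫ ≤ r, i = 1,…,n+1}` for unit vectors `u_i` with `⟪u_i,u_j⟫ = −1/n` (i ≠ j). -/
def IsRegularOutSimplex (n : ℕ) (r : ℝ) (S : Set (EuclideanSpace ℝ (Fin n))) : Prop :=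
  ∃ u : Fin (n + 1) → EuclideanSpace ℝ (Fin n),
    (∀ i, ‖u i‖ = 1) ∧ (∀ i j, i ≠ j → ⟪u i, u j⟫_ℝ = -1 / n) ∧
    S = {x | ∀ i, ⟪x, u i⟫_ℝ ≤ r}

/-- The measure on `ℝⁿ` with radial density `ρ(‖x‖)` w.r.t. Lebesgue measure. -/
noncomputable def muRad (n : ℕ) (ρ : ℝ → ℝ) : Measure (EuclideanSpace ℝ (Fin n)) :=
  volume.withDensity fun x => ENNReal.ofReal (ρ ‖x‖)

set_option maxHeartbeats 1000000 in
/-- every simplex containing the ball `B(0,r)` contains the "tangent body"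
given by its facet normals. -/
lemma simplex_tangent {n : ℕ} (hn : 2 ≤ n) {r : ℝ} (hr : 0 < r)
    {S : Set (EuclideanSpace ℝ (Fin n))} (hS : IsSimplex S)
    (hball : Metric.closedBall 0 r ⊆ S) :
    ∃ u : Fin (n+1) → EuclideanSpace ℝ (Fin n), (∀ i, ‖u i‖ = 1) ∧
      {x | ∀ i, ⟪x, u i⟫_ℝ ≤ r} ⊆ S := by
  classical
  obtain ⟨p, hp, rfl⟩ := hS
  have hspan : affineSpan ℝ (Set.range p) = ⊤ := by
    rw [hp.affineSpan_eq_top_iff_card_eq_finrank_add_one]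
    simp [finrank_euclideanSpace_fin]
  let b : AffineBasis (Fin (n+1)) ℝ (EuclideanSpace ℝ (Fin n)) := ⟨p, hp, hspan⟩
  have hb : ⇑b = p := rfl
  have hchar : convexHull ℝ (Set.range p) = {x | ∀ i, 0 ≤ b.coord i x} := by
    rw [← hb, b.convexHull_eq_nonneg_coord]
  -- linear parts are nonzero
  have hlin : ∀ i, (b.coord i).linear ≠ 0 := by
    intro i h0
    have hij : ∃ j, j ≠ i := by
      rcases Decidable.em (i = 0) with h | h
      · exact ⟨1, by simp [h]; omega⟩
      · exact ⟨0, fun hc => h hc.symm⟩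
    obtain ⟨j, hj⟩ := hij
    have h1 : b.coord i (b i) = 1 := b.coord_apply_eq i
    have h2 : b.coord i (b j) = 0 := b.coord_apply_ne (Ne.symm hj)
    have hd : (b.coord i).linear (b i -ᵥ b j) = b.coord i (b i) -ᵥ b.coord i (b j) :=
      (b.coord i).linearMap_vsub (b i) (b j)
    rw [h0, h1, h2] at hd
    simpa using hd.symm
  set v : Fin (n+1) → EuclideanSpace ℝ (Fin n) := fun i =>
    (InnerProductSpace.toDual ℝ _).symm (LinearMap.toContinuousLinearMap (b.coord i).linear)
    with hv
  have hvinner : ∀ i x, ⟪v i, x⟫_ℝ = (b.coord i).linear x := by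
    intro i x
    simp [hv, InnerProductSpace.toDual_symm_apply]
  have hvne : ∀ i, v i ≠ 0 := by
    intro i h0
    apply hlin i
    ext x
    have := hvinner i x
    rw [h0] at this
    simpa using this.symm
  refine ⟨fun i => -(‖v i‖⁻¹ • v i), fun i => ?_, ?_⟩
  · rw [norm_neg, norm_smul]
    simp [norm_inv, inv_mul_cancel₀ (norm_ne_zero_iff.2 (hvne i))]
  · intro x hx
    rw [hchar]
    intro i
    -- coord i x = coord i 0 + ⟪v i, x⟫
    have hdec : ∀ y, b.coord i y = ⟪v i, y⟫_ℝ + b.coord i 0 := by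
      intro y
      conv_lhs => rw [(b.coord i).decomp]
      simp [hvinner]
    -- ball gives coord i 0 ≥ r ‖v i‖
    have hx0 : b.coord i ((r * ‖v i‖⁻¹) • (-v i)) ≥ 0 := by
      have hmem : ((r * ‖v i‖⁻¹) • (-v i)) ∈ Metric.closedBall (0 : EuclideanSpace ℝ (Fin n)) r := by
        simp only [Metric.mem_closedBall, dist_zero_right, norm_smul, norm_neg]
        rw [Real.norm_of_nonneg (by positivity)]
        rw [mul_assoc, inv_mul_cancel₀ (norm_ne_zero_iff.2 (hvne i)), mul_one]
      have := hball hmem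
      rw [hchar] at this
      exact this i
    have hnorm : (0:ℝ) < ‖v i‖ := norm_pos_iff.2 (hvne i)
    have hinv : ‖v i‖⁻¹ * ‖v i‖ ^ 2 = ‖v i‖ := by
      rw [pow_two, ← mul_assoc, inv_mul_cancel₀ (ne_of_gt hnorm), one_mul]
    have hc0 : r * ‖v i‖ ≤ b.coord i 0 := by
      rw [hdec] at hx0
      rw [real_inner_smul_right, inner_neg_right, real_inner_self_eq_norm_sq] at hx0
      nlinarith [hx0, hinv]
    -- now conclude
    have hxi : ⟪x, -(‖v i‖⁻¹ • v i)⟫_ℝ ≤ r := hx i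
    rw [hdec]
    have : ⟪v i, x⟫_ℝ ≥ -(r * ‖v i‖) := by
      rw [inner_neg_right, real_inner_smul_right] at hxi
      have h4 : -(‖v i‖⁻¹ * ⟪x, v i⟫_ℝ) ≤ r := hxi
      have h3 : ‖v i‖ * (‖v i‖⁻¹ * ⟪x, v i⟫_ℝ) = ⟪x, v i⟫_ℝ := by
        rw [← mul_assoc, mul_inv_cancel₀ (ne_of_gt hnorm), one_mul]
      rw [real_inner_comm]
      nlinarith [mul_le_mul_of_nonneg_left h4 hnorm.le, h3]
    linarith [hc0, this]

lemma T_isSimplex {n : ℕ} {r : ℝ} (hr : 0 < r)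
    {u : Fin (n+1) → EuclideanSpace ℝ (Fin n)}
    (hnd : ∀ w : EuclideanSpace ℝ (Fin n), w ≠ 0 → ∃ i, 0 < ⟪u i, w⟫_ℝ) :
    IsSimplex {x | ∀ i, ⟪x, u i⟫_ℝ ≤ r} := by
  classical
  -- kernel-type fact
  have hker : ∀ (w : EuclideanSpace ℝ (Fin n)), (∀ i, ⟪u i, w⟫_ℝ = 0) → w = 0 := by
    intro w hw
    by_contra h0
    obtain ⟨k, hk⟩ := hnd w h0
    rw [hw k] at hk; exact lt_irrefl 0 hk
  -- solving the linear system avoiding one index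
  have hsolve : ∀ i : Fin (n+1), ∀ y : Fin (n+1) → ℝ, ∃ w : EuclideanSpace ℝ (Fin n),
      ∀ j, j ≠ i → ⟪u j, w⟫_ℝ = y j := by
    intro i y
    let Φ : EuclideanSpace ℝ (Fin n) →ₗ[ℝ] ({j : Fin (n+1) // j ≠ i} → ℝ) :=
      LinearMap.pi (fun j => (innerSL ℝ (u (j : Fin (n+1)))).toLinearMap)
    have hΦ : ∀ w (j : {j : Fin (n+1) // j ≠ i}), Φ w j = ⟪u (j : Fin (n+1)), w⟫_ℝ := by
      intro w j; rfl
    have hinj : Function.Injective Φ := by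
      rw [← LinearMap.ker_eq_bot, LinearMap.ker_eq_bot']
      intro w hw
      by_contra h0
      have hzero : ∀ j, j ≠ i → ⟪u j, w⟫_ℝ = 0 := by
        intro j hj
        have := congrFun hw ⟨j, hj⟩
        simpa [hΦ] using this
      obtain ⟨k, hk⟩ := hnd w h0
      obtain ⟨m, hm⟩ := hnd (-w) (neg_ne_zero.2 h0)
      rw [inner_neg_right] at hm
      rcases Decidable.em (k = i) with hki | hki
      · rcases Decidable.em (m = i) with hmi | hmi
        · rw [hki] at hk; rw [hmi] at hm; linarith
        · rw [hzero m hmi] at hm; simp at hm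
      · rw [hzero k hki] at hk; exact lt_irrefl 0 hk
    have hcard : Module.finrank ℝ (EuclideanSpace ℝ (Fin n))
        = Module.finrank ℝ ({j : Fin (n+1) // j ≠ i} → ℝ) := by
      rw [finrank_euclideanSpace_fin, Module.finrank_pi]
      have : Fintype.card {j : Fin (n+1) // j ≠ i} = n := by
        have := Fintype.card_subtype_compl (fun j : Fin (n+1) => j = i)
        rw [Fintype.card_subtype_eq, Fintype.card_fin] at this
        simpa using this
      rw [this]
    have hsurj : Function.Surjective Φ :=
      (LinearMap.injective_iff_surjective_of_finrank_eq_finrank hcard).1 hinj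
    obtain ⟨w, hw⟩ := hsurj (fun j => y (j : Fin (n+1)))
    exact ⟨w, fun j hj => by have := congrFun hw ⟨j, hj⟩; rw [hΦ] at this; exact this⟩
  -- vertices
  have hp' : ∀ i : Fin (n+1), ∃ w, ∀ j, j ≠ i → ⟪u j, w⟫_ℝ = r :=
    fun i => hsolve i (fun _ => r)
  choose p hpu using hp'
  -- Gordan: positive dependency
  have hspan : Submodule.span ℝ (Set.range fun j : {j : Fin (n+1) // j ≠ 0} =>
      u (j : Fin (n+1))) = ⊤ := by
    by_contra hK
    have hKbot : (Submodule.span ℝ (Set.range fun j : {j : Fin (n+1) // j ≠ 0} =>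
        u (j : Fin (n+1))))ᗮ ≠ ⊥ := by
      intro hbot; exact hK (Submodule.orthogonal_eq_bot_iff.1 hbot)
    obtain ⟨w, hwK, hw0⟩ := Submodule.ne_bot_iff _ |>.1 hKbot
    · have hzero : ∀ j : Fin (n+1), j ≠ 0 → ⟪u j, w⟫_ℝ = 0 := by
        intro j hj
        exact (Submodule.mem_orthogonal _ w).1 hwK _
          (Submodule.subset_span ⟨⟨j, hj⟩, rfl⟩)
      obtain ⟨k, hk⟩ := hnd w hw0
      obtain ⟨m, hm⟩ := hnd (-w) (neg_ne_zero.2 hw0)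
      rw [inner_neg_right] at hm
      rcases Decidable.em (k = 0) with hki | hki
      · rcases Decidable.em (m = 0) with hmi | hmi
        · rw [hki] at hk; rw [hmi] at hm; linarith
        · rw [hzero m hmi] at hm; simp at hm
      · rw [hzero k hki] at hk; exact lt_irrefl 0 hk
  have hu0 : u 0 ∈ Submodule.span ℝ (Set.range fun j : {j : Fin (n+1) // j ≠ 0} =>
      u (j : Fin (n+1))) := by rw [hspan]; trivial
  rw [Submodule.mem_span_range_iff_exists_fun] at hu0
  obtain ⟨c, hc⟩ := hu0
  have hcneg : ∀ k : {j : Fin (n+1) // j ≠ 0}, c k < 0 := by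
    intro k
    obtain ⟨w, hw⟩ := hsolve 0 (fun j => if j = (k : Fin (n+1)) then (-1:ℝ) else 0)
    have hwk : ⟪u (k : Fin (n+1)), w⟫_ℝ = -1 := by
      have := hw (k : Fin (n+1)) k.2
      simpa using this
    have hw0 : w ≠ 0 := by
      intro h; rw [h, inner_zero_right] at hwk; norm_num at hwk
    obtain ⟨m, hm⟩ := hnd w hw0
    have hm0 : m = 0 := by
      by_contra hmne
      rw [hw m hmne] at hm
      rcases Decidable.em (m = (k : Fin (n+1))) with h | h
      · rw [if_pos h] at hm; linarith
      · rw [if_neg h] at hm; exact lt_irrefl 0 hm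
    rw [hm0, ← hc, sum_inner] at hm
    have hterm : ∀ j : {j : Fin (n+1) // j ≠ 0},
        ⟪c j • u (j : Fin (n+1)), w⟫_ℝ = if j = k then -(c j) else 0 := by
      intro j
      rw [real_inner_smul_left, hw _ j.2]
      rcases Decidable.em (j = k) with h | h
      · rw [if_pos (by rw [h]), if_pos h]; ring
      · rw [if_neg (fun hc' => h (Subtype.ext hc')), if_neg h]; ring
    rw [Finset.sum_congr rfl (fun j _ => hterm j), Finset.sum_ite_eq' Finset.univ k] at hm
    simp only [Finset.mem_univ, if_true] at hm
    linarith
  -- the positive weights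
  set lam : Fin (n+1) → ℝ := fun i => if h : i = 0 then 1 else -(c ⟨i, h⟩) with hlam
  have hlampos : ∀ i, 0 < lam i := by
    intro i
    rcases Decidable.em (i = 0) with h | h
    · simp only [hlam]; rw [dif_pos h]; norm_num
    · simp only [hlam]; rw [dif_neg h]; linarith [hcneg ⟨i, h⟩]
  have hlamu : ∑ i, lam i • u i = 0 := by
    rw [← Finset.add_sum_erase _ _ (Finset.mem_univ 0)]
    have he : ∑ i ∈ Finset.univ.erase 0, lam i • u i
        = ∑ j : {j : Fin (n+1) // j ≠ 0}, lam (j : Fin (n+1)) • u (j : Fin (n+1)) := by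
      refine (Finset.sum_subtype _ (fun x => ?_) _)
      simp [Finset.mem_erase]
    rw [he]
    have : ∀ j : {j : Fin (n+1) // j ≠ 0},
        lam (j : Fin (n+1)) • u (j : Fin (n+1)) = -(c j • u (j : Fin (n+1))) := by
      intro j
      simp only [hlam]; rw [dif_neg j.2, neg_smul]
    rw [Finset.sum_congr rfl (fun j _ => this j), Finset.sum_neg_distrib, hc]
    have : lam 0 = 1 := by simp [hlam]
    rw [this, one_smul, add_neg_cancel]
  set τ : ℝ := r * ∑ i, lam i with hτdef
  have hτ : 0 < τ := by
    apply mul_pos hr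
    exact Finset.sum_pos (fun i _ => hlampos i) ⟨0, Finset.mem_univ 0⟩
  -- inner products of vertices
  have hpii : ∀ i, lam i * (r - ⟪u i, p i⟫_ℝ) = τ := by
    intro i
    have h0 : ⟪∑ j, lam j • u j, p i⟫_ℝ = 0 := by rw [hlamu, inner_zero_left]
    rw [sum_inner] at h0
    have hterm : ∀ j, ⟪lam j • u j, p i⟫_ℝ
        = lam j * r + (if j = i then lam i * (⟪u i, p i⟫_ℝ - r) else 0) := by
      intro j
      rcases Decidable.em (j = i) with h | h
      · rw [if_pos h, h, real_inner_smul_left]; ring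
      · rw [if_neg h, real_inner_smul_left, hpu i j h]; ring
    rw [Finset.sum_congr rfl (fun j _ => hterm j), Finset.sum_add_distrib,
      Finset.sum_ite_eq' Finset.univ i] at h0
    simp only [Finset.mem_univ, if_true, ← Finset.sum_mul] at h0
    rw [hτdef]
    linear_combination -h0
  -- key computation
  have hkey : ∀ (w : Fin (n+1) → ℝ) (k),
      ⟪u k, ∑ i, w i • p i⟫_ℝ = (∑ i, w i) * r - w k * (τ / lam k) := by
    intro w k
    rw [inner_sum]
    have hterm : ∀ j, ⟪u k, w j • p j⟫_ℝ
        = w j * r + (if j = k then -(w k * (τ / lam k)) else 0) := by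
      intro j
      rcases Decidable.em (j = k) with h | h
      · rw [if_pos h, h, real_inner_smul_right]
        have h2' : τ / lam k = r - ⟪u k, p k⟫_ℝ := by
          rw [div_eq_iff (hlampos k).ne']; linear_combination -hpii k
        have h2 : ⟪u k, p k⟫_ℝ = r - τ / lam k := by rw [h2']; ring
        rw [h2]; ring
      · rw [if_neg h, real_inner_smul_right, hpu j k (Ne.symm h)]
        ring
    rw [Finset.sum_congr rfl (fun j _ => hterm j), Finset.sum_add_distrib,
      Finset.sum_ite_eq' Finset.univ k]
    simp only [Finset.mem_univ, if_true, ← Finset.sum_mul]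
    ring
  -- barycentric weights
  set g : Fin (n+1) → EuclideanSpace ℝ (Fin n) → ℝ :=
    fun i x => lam i * (r - ⟪u i, x⟫_ℝ) / τ with hg
  have hgsum : ∀ x, ∑ i, g i x = 1 := by
    intro x
    rw [hg]
    have : ∀ i, lam i * (r - ⟪u i, x⟫_ℝ) / τ
        = (lam i * r - ⟪lam i • u i, x⟫_ℝ) / τ := by
      intro i; rw [real_inner_smul_left]; ring
    rw [Finset.sum_congr rfl (fun i _ => this i), ← Finset.sum_div]
    rw [Finset.sum_sub_distrib, ← sum_inner, hlamu, inner_zero_left, ← Finset.sum_mul]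
    rw [hτdef, sub_zero, mul_comm]
    exact div_self (mul_pos hr (Finset.sum_pos (fun i _ => hlampos i)
      ⟨0, Finset.mem_univ 0⟩)).ne'
  have hrepr : ∀ x, ∑ i, g i x • p i = x := by
    intro x
    have hz : ∀ k, ⟪u k, (∑ i, g i x • p i) - x⟫_ℝ = 0 := by
      intro k
      rw [inner_sub_right, hkey (fun i => g i x) k, hgsum x]
      have : g k x * (τ / lam k) = r - ⟪u k, x⟫_ℝ := by
        simp only [hg]
        field_simp
        rw [mul_comm, mul_div_assoc, div_self (hlampos k).ne', mul_one]
      rw [this]; ring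
    have := hker _ hz
    have h2 : (∑ i, g i x • p i) - x = 0 := this
    linear_combination (norm := module) h2
  refine ⟨p, ?_, ?_⟩
  · -- affine independence
    rw [affineIndependent_iff]
    intro s w hw0 hcomb e he
    set w' : Fin (n+1) → ℝ := fun i => if i ∈ s then w i else 0 with hw'
    have hsum' : ∑ i, w' i = 0 := by
      rw [hw', Finset.sum_ite_mem, Finset.univ_inter, hw0]
    have hcomb' : ∑ i, w' i • p i = 0 := by
      rw [hw']
      have : ∀ i, (if i ∈ s then w i else 0) • p i = if i ∈ s then w i • p i else 0 := by
        intro i; split <;> simp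
      rw [Finset.sum_congr rfl (fun i _ => this i), Finset.sum_ite_mem, Finset.univ_inter, hcomb]
    have h0 : ⟪u e, ∑ i, w' i • p i⟫_ℝ = 0 := by rw [hcomb', inner_zero_right]
    rw [hkey w' e, hsum'] at h0
    have hwe : w' e * (τ / lam e) = 0 := by linarith
    have : w' e = 0 := by
      rcases mul_eq_zero.1 hwe with h | h
      · exact h
      · exfalso
        have := div_pos hτ (hlampos e)
        rw [h] at this; exact lt_irrefl 0 this
    simp only [hw', he, if_true] at this
    exact this
  · -- set equality
    apply Set.Subset.antisymm
    · intro x hx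
      have hmem : Finset.univ.centerMass (fun i => g i x) p ∈ convexHull ℝ (Set.range p) := by
        apply Finset.centerMass_mem_convexHull
        · intro i _
          rw [hg]
          apply div_nonneg _ (le_of_lt hτ)
          apply mul_nonneg (le_of_lt (hlampos i))
          have := hx i
          rw [real_inner_comm] at this
          linarith
        · rw [hgsum x]; norm_num
        · intro i _; exact ⟨i, rfl⟩
      rwa [Finset.centerMass_eq_of_sum_1 _ _ (hgsum x), hrepr x] at hmem
    · apply convexHull_min
      · rintro y ⟨i, rfl⟩
        intro j
        rw [real_inner_comm]
        rcases Decidable.em (j = i) with h | h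
        · rw [h]
          have h2 : τ / lam i = r - ⟪u i, p i⟫_ℝ := by
            rw [div_eq_iff (hlampos i).ne']; linear_combination -hpii i
          have h3 := div_pos hτ (hlampos i)
          linarith
        · rw [hpu i j h]
      · intro x hx y hy a b ha hb hab
        intro i
        have hx' := hx i
        have hy' := hy i
        calc ⟪a • x + b • y, u i⟫_ℝ = a * ⟪x, u i⟫_ℝ + b * ⟪y, u i⟫_ℝ := by
              rw [inner_add_left, real_inner_smul_left, real_inner_smul_left]
          _ ≤ a * r + b * r := by
              apply add_le_add (mul_le_mul_of_nonneg_left hx' ha)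
                (mul_le_mul_of_nonneg_left hy' hb)
          _ = r := by rw [← add_mul, hab, one_mul]

lemma exists_min_T {n : ℕ} (hn : 0 < n) {r : ℝ} (hr : 0 < r)
    (μ : Measure (EuclideanSpace ℝ (Fin n)))
    (hfin : μ Set.univ ≠ ⊤)
    (hnull : ∀ u : EuclideanSpace ℝ (Fin n), ‖u‖ = 1 → μ {x | ⟪x, u⟫_ℝ = r} = 0) :
    ∃ a : Fin (n+1) → EuclideanSpace ℝ (Fin n), (∀ i, ‖a i‖ = 1) ∧
      ∀ v : Fin (n+1) → EuclideanSpace ℝ (Fin n), (∀ i, ‖v i‖ = 1) →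
        μ {x | ∀ i, ⟪x, a i⟫_ℝ ≤ r} ≤ μ {x | ∀ i, ⟪x, v i⟫_ℝ ≤ r} := by
  classical
  set F : (Fin (n+1) → EuclideanSpace ℝ (Fin n)) → ℝ≥0∞ :=
    fun v => μ {x | ∀ i, ⟪x, v i⟫_ℝ ≤ r} with hF
  set Sph : Set (Fin (n+1) → EuclideanSpace ℝ (Fin n)) :=
    Set.univ.pi (fun _ => Metric.sphere (0 : EuclideanSpace ℝ (Fin n)) 1) with hSph
  have hmemSph : ∀ v : Fin (n+1) → EuclideanSpace ℝ (Fin n),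
      v ∈ Sph ↔ ∀ i, ‖v i‖ = 1 := by
    intro v
    rw [hSph, Set.mem_univ_pi]
    apply forall_congr'
    intro i
    rw [mem_sphere, dist_zero_right]
  have hcomp : IsCompact Sph := isCompact_univ_pi (fun _ => isCompact_sphere _ _)
  have hne : Sph.Nonempty := by
    refine ⟨fun _ => EuclideanSpace.single (⟨0, hn⟩ : Fin n) (1:ℝ), ?_⟩
    rw [hmemSph]
    intro i
    rw [EuclideanSpace.norm_single]
    norm_num
  -- the infimum
  set m : ℝ≥0∞ := ⨅ v : Sph, F (v : Fin (n+1) → EuclideanSpace ℝ (Fin n)) with hm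
  have hmlt : m ≠ ⊤ := by
    obtain ⟨v0, hv0⟩ := hne
    refine ne_top_of_le_ne_top hfin ?_
    refine le_trans (iInf_le _ ⟨v0, hv0⟩) (measure_mono (Set.subset_univ _))
  -- minimizing sequence
  have hseq : ∀ k : ℕ, ∃ v ∈ Sph, F v ≤ m + ((k:ℝ≥0∞) + 1)⁻¹ := by
    intro k
    have hlt : m < m + ((k:ℝ≥0∞) + 1)⁻¹ := by
      apply ENNReal.lt_add_right hmlt
      simp
    rw [hm] at hlt
    obtain ⟨⟨v, hv⟩, hvlt⟩ := iInf_lt_iff.1 hlt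
    exact ⟨v, hv, le_of_lt hvlt⟩
  choose w hwS hwF using hseq
  obtain ⟨a, haS, φ, hφmono, hφtend⟩ := hcomp.tendsto_subseq hwS
  have haunit : ∀ i, ‖a i‖ = 1 := (hmemSph a).1 haS
  refine ⟨a, haunit, ?_⟩
  have hmain : F a ≤ m := by
    -- strict sublevel decomposition
    set B : Set (EuclideanSpace ℝ (Fin n)) := {x | ∀ i, ⟪x, a i⟫_ℝ < r} with hB
    set A : ℕ → Set (EuclideanSpace ℝ (Fin n)) :=
      fun q => {x | ∀ i, ⟪x, a i⟫_ℝ ≤ r - r/(q+2)} ∩ Metric.closedBall 0 (q+1) with hA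
    have hAmono : Monotone A := by
      intro q q' hq
      rw [hA]
      apply Set.inter_subset_inter
      · intro x hx i
        refine le_trans (hx i) ?_
        have hqq : ((q:ℝ)) ≤ (q':ℝ) := Nat.cast_le.mpr hq
        have h1 : r/((q':ℝ)+2) ≤ r/((q:ℝ)+2) := by
          apply div_le_div_of_nonneg_left hr.le (by positivity)
          linarith
        linarith
      · apply Metric.closedBall_subset_closedBall
        have hqq : ((q:ℝ)) ≤ (q':ℝ) := Nat.cast_le.mpr hq
        linarith
    have hBA : B = ⋃ q, A q := by
      apply Set.Subset.antisymm
      · intro x hx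
        have hsup : ∀ i, ⟪x, a i⟫_ℝ ≤ Finset.univ.sup' Finset.univ_nonempty
            (fun i => ⟪x, a i⟫_ℝ) :=
          fun i => Finset.le_sup' (fun j => ⟪x, a j⟫_ℝ) (Finset.mem_univ i)
        set Mx := Finset.univ.sup' Finset.univ_nonempty (fun i => ⟪x, a i⟫_ℝ) with hMx
        have hMxlt : Mx < r := by
          rw [hMx, Finset.sup'_lt_iff]
          intro i _
          exact hx i
        obtain ⟨q₂, hq₂⟩ := exists_nat_ge (r/(r - Mx))
        set q := max q₂ ⌈‖x‖⌉₊ with hq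
        refine Set.mem_iUnion.2 ⟨q, ?_, ?_⟩
        · intro i
          have h1 : r/((q:ℝ)+2) ≤ r - Mx := by
            rw [div_le_iff₀ (by positivity)]
            have h2 : r/(r-Mx) ≤ (q:ℝ)+2 := by
              refine le_trans hq₂ ?_
              have : (q₂:ℝ) ≤ (q:ℝ) := Nat.cast_le.2 (le_max_left _ _)
              linarith
            rw [div_le_iff₀ (by linarith)] at h2
            nlinarith
          have := hsup i
          linarith
        · rw [Metric.mem_closedBall, dist_zero_right]
          have : ‖x‖ ≤ (⌈‖x‖⌉₊ : ℝ) := Nat.le_ceil _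
          have h3 : ((⌈‖x‖⌉₊:ℕ):ℝ) ≤ (q:ℝ) := Nat.cast_le.2 (le_max_right _ _)
          linarith
      · intro x hx
        obtain ⟨q, hq⟩ := Set.mem_iUnion.1 hx
        intro i
        have h1 := hq.1 i
        have h2 : r/((q:ℝ)+2) > 0 := by positivity
        have h3 : ⟪x, a i⟫_ℝ ≤ r - r/((q:ℝ)+2) := h1
        show ⟪x, a i⟫_ℝ < r
        linarith
    -- each A q has measure at most m
    have hAq : ∀ q, μ (A q) ≤ m := by
      intro q
      set δ : ℝ := (r/(q+2))/(q+1+1) with hδ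
      have hδpos : 0 < δ := by rw [hδ]; positivity
      -- eventually the subsequence tangent bodies contain A q
      have htendi : ∀ i, Tendsto (fun k => w (φ k) i) atTop (𝓝 (a i)) := by
        intro i
        exact (tendsto_pi_nhds.1 hφtend) i
      have hev : ∀ᶠ k in atTop, ∀ i, dist (w (φ k) i) (a i) < δ := by
        rw [eventually_all]
        intro i
        exact (htendi i) (Metric.ball_mem_nhds (a i) hδpos)
      have hsub : ∀ᶠ k in atTop, A q ⊆ {x | ∀ i, ⟪x, w (φ k) i⟫_ℝ ≤ r} := by
        filter_upwards [hev] with k hk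
        intro x hx i
        have h1 : ⟪x, w (φ k) i⟫_ℝ = ⟪x, a i⟫_ℝ + ⟪x, w (φ k) i - a i⟫_ℝ := by
          rw [← inner_add_right]
          congr 1
          abel
        have h2 : ⟪x, w (φ k) i - a i⟫_ℝ ≤ ‖x‖ * ‖w (φ k) i - a i‖ :=
          real_inner_le_norm _ _
        have h3 : ‖x‖ ≤ (q:ℝ)+1 := by
          have := hx.2
          rwa [Metric.mem_closedBall, dist_zero_right] at this
        have h4 : ‖w (φ k) i - a i‖ ≤ δ := by
          have := hk i
          rw [dist_eq_norm] at this
          linarith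
        have h5 : ⟪x, a i⟫_ℝ ≤ r - r/(q+2) := hx.1 i
        have h6 : ‖x‖ * ‖w (φ k) i - a i‖ ≤ ((q:ℝ)+1) * δ := by
          apply mul_le_mul h3 h4 (norm_nonneg _) (by positivity)
        have h7 : ((q:ℝ)+1) * δ ≤ r/(q+2) := by
          rw [hδ]
          have hpos : (0:ℝ) < r/((q:ℝ)+2) := by positivity
          rw [mul_comm, div_mul_eq_mul_div, div_le_iff₀ (by positivity : (0:ℝ) < (q:ℝ)+1+1)]
          nlinarith [hpos]
        linarith
      -- conclude via epsilon argument
      refine ENNReal.le_of_forall_pos_le_add ?_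
      intro ε hε _
      obtain ⟨k₀, hk₀⟩ := eventually_atTop.1 hsub
      obtain ⟨n₁, hn₁⟩ := ENNReal.exists_inv_nat_lt
        (show (ε : ℝ≥0∞) ≠ 0 by exact_mod_cast hε.ne')
      set k := max k₀ n₁ with hk
      have hsubk : A q ⊆ {x | ∀ i, ⟪x, w (φ k) i⟫_ℝ ≤ r} := hk₀ k (le_max_left _ _)
      have h8 : μ (A q) ≤ F (w (φ k)) := measure_mono hsubk
      have h9 : F (w (φ k)) ≤ m + ((φ k : ℝ≥0∞) + 1)⁻¹ := hwF (φ k)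
      have h10 : ((φ k : ℝ≥0∞) + 1)⁻¹ ≤ (ε : ℝ≥0∞) := by
        refine le_trans ?_ hn₁.le
        apply ENNReal.inv_le_inv.2
        have h11 : (n₁ : ℝ≥0∞) ≤ (k : ℝ≥0∞) := by exact_mod_cast le_max_right k₀ n₁
        have h12 : (k : ℝ≥0∞) ≤ (φ k : ℝ≥0∞) := by exact_mod_cast hφmono.le_apply
        calc (n₁ : ℝ≥0∞) ≤ (φ k : ℝ≥0∞) := le_trans h11 h12
          _ ≤ (φ k : ℝ≥0∞) + 1 := le_self_add
      calc μ (A q) ≤ m + ((φ k : ℝ≥0∞) + 1)⁻¹ := le_trans h8 h9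
        _ ≤ m + ε := add_le_add_right h10 _
    -- put together
    have hTB : μ {x | ∀ i, ⟪x, a i⟫_ℝ ≤ r} ≤ μ B := by
      have hsplit : {x | ∀ i, ⟪x, a i⟫_ℝ ≤ r} ⊆ B ∪ (⋃ i, {x | ⟪x, a i⟫_ℝ = r}) := by
        intro x hx
        rcases Decidable.em (∀ i, ⟪x, a i⟫_ℝ < r) with h | h
        · exact Or.inl h
        · push_neg at h
          obtain ⟨i, hi⟩ := h
          exact Or.inr (Set.mem_iUnion.2 ⟨i, le_antisymm (hx i) hi⟩)
      refine le_trans (measure_mono hsplit) ?_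
      refine le_trans (measure_union_le _ _) ?_
      have : μ (⋃ i, {x | ⟪x, a i⟫_ℝ = r}) = 0 := by
        refine measure_iUnion_null ?_
        intro i
        exact hnull (a i) (haunit i)
      rw [this, add_zero]
    have hBm : μ B ≤ m := by
      rw [hBA, Monotone.measure_iUnion hAmono]
      exact iSup_le hAq
    exact le_trans hTB hBm
  intro v hv
  refine le_trans hmain ?_
  exact iInf_le _ (⟨v, (hmemSph v).2 hv⟩ : Sph)

lemma hyperplane_null {n : ℕ} (u : EuclideanSpace ℝ (Fin n)) (hu : u ≠ 0) (r : ℝ) :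
    (volume : Measure (EuclideanSpace ℝ (Fin n))) {x | ⟪x, u⟫_ℝ = r} = 0 := by
  set f : EuclideanSpace ℝ (Fin n) →ₗ[ℝ] ℝ := (innerSL ℝ u).toLinearMap with hf
  have hfapp : ∀ x, f x = ⟪u, x⟫_ℝ := fun x => rfl
  set x₀ : EuclideanSpace ℝ (Fin n) := (r / ‖u‖^2) • u with hx₀def
  have hux₀ : ⟪u, x₀⟫_ℝ = r := by
    rw [hx₀def, real_inner_smul_right, real_inner_self_eq_norm_sq]
    have h := pow_ne_zero 2 (norm_ne_zero_iff.2 hu)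
    field_simp
  have hset : {x | ⟪x, u⟫_ℝ = r} = (fun x => -x₀ + x) ⁻¹' (LinearMap.ker f : Set _) := by
    ext x
    simp only [Set.mem_setOf_eq, Set.mem_preimage, SetLike.mem_coe, LinearMap.mem_ker,
      map_add, map_neg, hfapp]
    rw [inner_add_right, inner_neg_right, hux₀, real_inner_comm u x]
    constructor
    · intro h; rw [h]; ring
    · intro h; linarith
  rw [hset, measure_preimage_add]
  apply Measure.addHaar_submodule
  intro htop
  have : u ∈ LinearMap.ker f := htop ▸ Submodule.mem_top
  rw [LinearMap.mem_ker, hfapp, real_inner_self_eq_norm_sq] at this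
  exact hu (by simpa using norm_eq_zero.1 (by nlinarith [this] : ‖u‖ = 0))

lemma ball_subset_T {n : ℕ} {r : ℝ} {u : Fin (n+1) → EuclideanSpace ℝ (Fin n)}
    (hu : ∀ i, ‖u i‖ = 1) :
    Metric.closedBall (0 : EuclideanSpace ℝ (Fin n)) r ⊆ {x | ∀ i, ⟪x, u i⟫_ℝ ≤ r} := by
  intro x hx i
  rw [Metric.mem_closedBall, dist_zero_right] at hx
  calc ⟪x, u i⟫_ℝ ≤ ‖x‖ * ‖u i‖ := real_inner_le_norm _ _
    _ = ‖x‖ := by rw [hu i, mul_one]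
    _ ≤ r := hx

lemma tube_subset_T {n : ℕ} {r : ℝ} {u : Fin (n+1) → EuclideanSpace ℝ (Fin n)}
    (hu : ∀ i, ‖u i‖ = 1) {w : EuclideanSpace ℝ (Fin n)}
    (hw : ∀ i, ⟪u i, w⟫_ℝ ≤ 0) {t : ℝ} (ht : 0 ≤ t) :
    Metric.ball (t • w) r ⊆ {x | ∀ i, ⟪x, u i⟫_ℝ ≤ r} := by
  intro x hx i
  rw [Metric.mem_ball, dist_eq_norm] at hx
  have h1 : ⟪x, u i⟫_ℝ = ⟪x - t • w, u i⟫_ℝ + t * ⟪w, u i⟫_ℝ := by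
    rw [← real_inner_smul_left, ← inner_add_left]
    congr 1
    abel
  have h2 : ⟪x - t • w, u i⟫_ℝ ≤ ‖x - t • w‖ * ‖u i‖ := real_inner_le_norm _ _
  have h3 : t * ⟪w, u i⟫_ℝ ≤ 0 :=
    mul_nonpos_of_nonneg_of_nonpos ht (by rw [real_inner_comm]; exact hw i)
  rw [hu i, mul_one] at h2
  linarith

lemma measurable_radial {n : ℕ} {ρ : ℝ → ℝ} (hanti : AntitoneOn ρ (Set.Ici 0)) :
    Measurable (fun x : EuclideanSpace ℝ (Fin n) => ENNReal.ofReal (ρ ‖x‖)) := by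
  have hg : Antitone (fun t : ℝ => ρ (max t 0)) := by
    intro t s hts
    exact hanti (le_max_right t 0) (le_max_right s 0) (max_le_max hts le_rfl)
  have hmeas : Measurable (fun t : ℝ => ρ (max t 0)) := hg.measurable
  have : (fun x : EuclideanSpace ℝ (Fin n) => ENNReal.ofReal (ρ ‖x‖))
      = fun x => ENNReal.ofReal ((fun t => ρ (max t 0)) ‖x‖) := by
    funext x
    simp [max_eq_left (norm_nonneg x)]
  rw [this]
  exact ENNReal.measurable_ofReal.comp (hmeas.comp measurable_norm)

-- the auxiliary decaying profile
noncomputable def phiA (nn : ℕ) (A : ℝ) (t : ℝ) : ℝ := ((1 + max (t - A) 0)^nn)⁻¹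

lemma phiA_pos (nn : ℕ) (A t : ℝ) : 0 < phiA nn A t := by
  unfold phiA
  have : (0:ℝ) < 1 + max (t - A) 0 := by positivity
  positivity

lemma phiA_le_one (nn : ℕ) (A t : ℝ) : phiA nn A t ≤ 1 := by
  unfold phiA
  rw [inv_le_one_iff₀]
  right
  apply one_le_pow₀
  simp [le_max_iff]

lemma phiA_eq_one {nn : ℕ} {A t : ℝ} (h : t ≤ A) : phiA nn A t = 1 := by
  unfold phiA
  rw [max_eq_right (by linarith), add_zero, one_pow, inv_one]

lemma phiA_anti (nn : ℕ) (A : ℝ) : Antitone (phiA nn A) := by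
  intro t s hts
  unfold phiA
  have h1 : (0:ℝ) < 1 + max (t - A) 0 := by positivity
  apply inv_anti₀ (by positivity)
  apply pow_le_pow_left₀ h1.le
  have : max (t - A) 0 ≤ max (s - A) 0 := max_le_max (by linarith) le_rfl
  linarith

lemma phiA_bound {nn : ℕ} {A : ℝ} (hA : 0 ≤ A) {t : ℝ} (ht : 0 ≤ t) :
    phiA nn A t ≤ (A+1)^nn * ((1+t)^nn)⁻¹ := by
  have h1 : (1+t) ≤ (A+1) * (1 + max (t - A) 0) := by
    rcases le_or_gt t A with h | h
    · rw [max_eq_right (by linarith), add_zero, mul_one]; linarith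
    · rw [max_eq_left (by linarith)]
      nlinarith
  have hx : (0:ℝ) < 1 + max (t - A) 0 := by positivity
  have hy : (0:ℝ) < 1 + t := by linarith
  have hC : (0:ℝ) < A + 1 := by linarith
  have h2 : (1+t)^nn ≤ (A+1)^nn * (1 + max (t - A) 0)^nn := by
    rw [← mul_pow]
    exact pow_le_pow_left₀ hy.le h1 nn
  unfold phiA
  rw [← div_eq_mul_inv, le_div_iff₀ (by positivity)]
  rw [inv_mul_eq_div, div_le_iff₀ (by positivity)]
  linarith

set_option maxHeartbeats 1000000 in
/-- If, for every monotone decreasing positive integrable radial density, every local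
minimizer (w.r.t. Hausdorff distance) among simplices containing `B(0,r)` has measure at
least that of the regular outscribed simplex `S₀`, then `S₀` is the global minimizer. -/
theorem stmt11 (n : ℕ) (hn : 2 ≤ n) (r : ℝ) (hr : 0 < r)
    (S₀ : Set (EuclideanSpace ℝ (Fin n))) (hS₀ : IsRegularOutSimplex n r S₀)
    (H : ∀ ρ : ℝ → ℝ, (∀ t, 0 ≤ t → 0 < ρ t) → AntitoneOn ρ (Set.Ici 0) →
      (∫⁻ x : EuclideanSpace ℝ (Fin n), ENNReal.ofReal (ρ ‖x‖)) ≠ ⊤ →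
      ∀ S : Set (EuclideanSpace ℝ (Fin n)), IsSimplex S → Metric.closedBall 0 r ⊆ S →
      (∃ ε > 0, ∀ S' : Set (EuclideanSpace ℝ (Fin n)), IsSimplex S' →
        Metric.closedBall 0 r ⊆ S' → Metric.hausdorffDist S S' < ε →
        muRad n ρ S ≤ muRad n ρ S') →
      muRad n ρ S₀ ≤ muRad n ρ S) :
    ∀ ρ : ℝ → ℝ, (∀ t, 0 ≤ t → 0 < ρ t) → AntitoneOn ρ (Set.Ici 0) →
      (∫⁻ x : EuclideanSpace ℝ (Fin n), ENNReal.ofReal (ρ ‖x‖)) ≠ ⊤ →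
      ∀ S : Set (EuclideanSpace ℝ (Fin n)), IsSimplex S → Metric.closedBall 0 r ⊆ S →
      muRad n ρ S₀ ≤ muRad n ρ S := by
  intro ρ hpos hanti hint S hS hball
  classical
  have hn1 : 0 < n := by omega
  obtain ⟨p, hp, hSeq⟩ := hS
  have hS' : IsSimplex S := ⟨p, hp, hSeq⟩
  have hSbdd : Bornology.IsBounded S := by
    rw [hSeq, isBounded_convexHull]
    exact (Set.finite_range p).isBounded
  obtain ⟨R, hSR⟩ := hSbdd.subset_closedBall 0
  set V := volume (Metric.closedBall (0 : EuclideanSpace ℝ (Fin n)) R) with hV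
  have hVlt : V < ⊤ := measure_closedBall_lt_top
  have hmeasρ : Measurable fun x : EuclideanSpace ℝ (Fin n) => ENNReal.ofReal (ρ ‖x‖) :=
    measurable_radial hanti
  have hμρuniv : muRad n ρ Set.univ ≠ ⊤ := by
    rw [muRad, withDensity_apply _ MeasurableSet.univ, Measure.restrict_univ]; exact hint
  -- main estimate for every c > 0
  have key : ∀ c : ℝ, 0 < c →
      muRad n ρ S₀ ≤ muRad n ρ S + ENNReal.ofReal c * V := by
    intro c hc
    set vr := volume (Metric.ball (0 : EuclideanSpace ℝ (Fin n)) r) with hvr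
    have hvrpos : 0 < vr := measure_ball_pos _ _ hr
    have hvrlt : vr < ⊤ := measure_ball_lt_top
    set M := muRad n ρ Set.univ + ENNReal.ofReal c * V with hM
    have hMlt : M ≠ ⊤ := by
      rw [hM]
      exact ENNReal.add_ne_top.2 ⟨hμρuniv, ENNReal.mul_ne_top ENNReal.ofReal_ne_top hVlt.ne⟩
    set x₀ := ENNReal.ofReal c * vr with hx₀
    have hx₀0 : x₀ ≠ 0 := by
      rw [hx₀]
      exact mul_ne_zero (by simp only [ne_eq, ENNReal.ofReal_eq_zero, not_le]; exact hc)
        hvrpos.ne'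
    have hx₀top : x₀ ≠ ⊤ := ENNReal.mul_ne_top ENNReal.ofReal_ne_top hvrlt.ne
    obtain ⟨K, hK⟩ := ENNReal.exists_nat_gt (ENNReal.div_lt_top hMlt hx₀0).ne
    have hKx : M < K * x₀ := by
      calc M = M / x₀ * x₀ := (ENNReal.div_mul_cancel hx₀0 hx₀top).symm
        _ < K * x₀ := ENNReal.mul_lt_mul_left hx₀0 hx₀top hK
    set A := 2*r*K + r with hA
    have hA0 : (0:ℝ) ≤ A := by rw [hA]; positivity
    set ρc : ℝ → ℝ := fun t => ρ t + c * phiA (n+1) A t with hρc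
    have hρcpos : ∀ t, 0 ≤ t → 0 < ρc t := by
      intro t ht
      have h1 := hpos t ht
      have h2 := phiA_pos (n+1) A t
      simp only [hρc]
      nlinarith
    have hρcanti : AntitoneOn ρc (Set.Ici 0) := by
      intro t ht s hs hts
      simp only [hρc]
      have h1 := hanti ht hs hts
      have h2 := phiA_anti (n+1) A hts
      nlinarith [hc]
    set dens : EuclideanSpace ℝ (Fin n) → ℝ≥0∞ :=
      fun x => ENNReal.ofReal (c * phiA (n+1) A ‖x‖) with hdens
    have hdenseq : ∀ x : EuclideanSpace ℝ (Fin n),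
        ENNReal.ofReal (ρc ‖x‖) = ENNReal.ofReal (ρ ‖x‖) + dens x := by
      intro x
      rw [hdens, ← ENNReal.ofReal_add (le_of_lt (hpos _ (norm_nonneg _)))
        (mul_nonneg hc.le (phiA_pos (n+1) A ‖x‖).le)]
    set ν := volume.withDensity dens with hν
    have hcont : Continuous fun x : EuclideanSpace ℝ (Fin n) => c * phiA (n+1) A ‖x‖ := by
      unfold phiA
      apply continuous_const.mul
      apply Continuous.inv₀
      · exact (continuous_const.add ((continuous_norm.sub continuous_const).max
          continuous_const)).pow _
      · intro x
        have h1 : (0:ℝ) < 1 + max (‖x‖ - A) 0 := by positivity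
        positivity
    have hmeasdens : Measurable dens := by
      rw [hdens]
      exact ENNReal.measurable_ofReal.comp hcont.measurable
    have hsplit : muRad n ρc = muRad n ρ + ν := by
      rw [muRad, muRad, hν, ← withDensity_add_left hmeasρ]
      congr 1
      funext x
      rw [Pi.add_apply]
      exact hdenseq x
    have hintc : (∫⁻ x : EuclideanSpace ℝ (Fin n), ENNReal.ofReal (ρc ‖x‖)) ≠ ⊤ := by
      have hsum : (∫⁻ x : EuclideanSpace ℝ (Fin n), ENNReal.ofReal (ρc ‖x‖))
          = (∫⁻ x : EuclideanSpace ℝ (Fin n), ENNReal.ofReal (ρ ‖x‖))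
            + ∫⁻ x : EuclideanSpace ℝ (Fin n), dens x := by
        rw [← lintegral_add_left hmeasρ]
        exact lintegral_congr hdenseq
      rw [hsum]
      refine ENNReal.add_ne_top.2 ⟨hint, ?_⟩
      have hJ : (∫⁻ x : EuclideanSpace ℝ (Fin n),
          ENNReal.ofReal ((((1:ℝ)+‖x‖)^(n+1))⁻¹)) < ⊤ := by
        have hi : Integrable (fun x : EuclideanSpace ℝ (Fin n) =>
            ((1:ℝ)+‖x‖) ^ (-((n:ℝ)+1))) := by
          apply integrable_one_add_norm
          rw [finrank_euclideanSpace_fin]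
          linarith
        have heq : ∀ x : EuclideanSpace ℝ (Fin n),
            ((((1:ℝ)+‖x‖)^(n+1))⁻¹ : ℝ) = ((1:ℝ)+‖x‖) ^ (-((n:ℝ)+1)) := by
          intro x
          have h1 : ((1:ℝ)+‖x‖) ^ (-((n:ℝ)+1)) = (((1:ℝ)+‖x‖) ^ ((n:ℝ)+1))⁻¹ :=
            Real.rpow_neg (by positivity) _
          have h2 : ((1:ℝ)+‖x‖) ^ ((n:ℝ)+1) = ((1:ℝ)+‖x‖)^(n+1) := by
            rw [show ((n:ℝ)+1) = ((n+1 : ℕ) : ℝ) by push_cast; ring, Real.rpow_natCast]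
          rw [h1, h2]
        rw [show (fun x : EuclideanSpace ℝ (Fin n) =>
            ENNReal.ofReal ((((1:ℝ)+‖x‖)^(n+1))⁻¹))
            = fun x => ENNReal.ofReal (((1:ℝ)+‖x‖) ^ (-((n:ℝ)+1))) from
          funext fun x => by rw [heq x]]
        exact hi.lintegral_lt_top
      have hb : ∀ x : EuclideanSpace ℝ (Fin n),
          dens x ≤ ENNReal.ofReal (c * (A+1)^(n+1))
            * ENNReal.ofReal ((((1:ℝ)+‖x‖)^(n+1))⁻¹) := by
        intro x
        rw [hdens, ← ENNReal.ofReal_mul (by positivity)]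
        apply ENNReal.ofReal_le_ofReal
        have hbb := phiA_bound (nn := n+1) hA0 (norm_nonneg x)
        calc c * phiA (n+1) A ‖x‖ ≤ c * ((A+1)^(n+1) * (((1:ℝ)+‖x‖)^(n+1))⁻¹) :=
              mul_le_mul_of_nonneg_left hbb hc.le
          _ = c * (A+1)^(n+1) * ((((1:ℝ)+‖x‖)^(n+1))⁻¹) := by ring
      have hle : (∫⁻ x : EuclideanSpace ℝ (Fin n), dens x)
          ≤ ENNReal.ofReal (c * (A+1)^(n+1)) * ∫⁻ x : EuclideanSpace ℝ (Fin n),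
              ENNReal.ofReal ((((1:ℝ)+‖x‖)^(n+1))⁻¹) := by
        calc (∫⁻ x : EuclideanSpace ℝ (Fin n), dens x)
            ≤ ∫⁻ x : EuclideanSpace ℝ (Fin n), ENNReal.ofReal (c * (A+1)^(n+1))
                * ENNReal.ofReal ((((1:ℝ)+‖x‖)^(n+1))⁻¹) := lintegral_mono hb
          _ = ENNReal.ofReal (c * (A+1)^(n+1)) * ∫⁻ x : EuclideanSpace ℝ (Fin n),
                ENNReal.ofReal ((((1:ℝ)+‖x‖)^(n+1))⁻¹) :=
              lintegral_const_mul' _ _ ENNReal.ofReal_ne_top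
      exact ne_top_of_le_ne_top (ENNReal.mul_ne_top ENNReal.ofReal_ne_top hJ.ne) hle
    have hνS : ν S ≤ ENNReal.ofReal c * V := by
      refine le_trans (measure_mono hSR) ?_
      rw [hν, withDensity_apply _ measurableSet_closedBall]
      calc (∫⁻ x in Metric.closedBall (0:EuclideanSpace ℝ (Fin n)) R, dens x)
          ≤ ∫⁻ _x in Metric.closedBall (0:EuclideanSpace ℝ (Fin n)) R,
              ENNReal.ofReal c := by
            apply lintegral_mono
            intro x
            rw [hdens]
            apply ENNReal.ofReal_le_ofReal
            nlinarith [phiA_le_one (n+1) A ‖x‖, phiA_pos (n+1) A ‖x‖, hc]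
        _ = ENNReal.ofReal c * V := by rw [setLIntegral_const, hV]
    have hμcapp : ∀ X : Set (EuclideanSpace ℝ (Fin n)),
        muRad n ρc X = muRad n ρ X + ν X := by
      intro X
      rw [hsplit, Measure.add_apply]
    have hμcuniv : muRad n ρc Set.univ ≠ ⊤ := by
      rw [muRad, withDensity_apply _ MeasurableSet.univ, Measure.restrict_univ]
      exact hintc
    have hμcnull : ∀ u : EuclideanSpace ℝ (Fin n), ‖u‖ = 1 →
        muRad n ρc {x | ⟪x, u⟫_ℝ = r} = 0 := by
      intro u hu
      have h0 := hyperplane_null u (fun h => by rw [h] at hu; simp at hu) r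
      rw [muRad]
      exact (withDensity_absolutelyContinuous volume _) h0
    obtain ⟨a, haunit, hamin⟩ := exists_min_T hn1 hr (muRad n ρc) hμcuniv hμcnull
    obtain ⟨uS, huSunit, huSsub⟩ := simplex_tangent hn hr hS' hball
    have hTa_le_S : muRad n ρc {x | ∀ i, ⟪x, a i⟫_ℝ ≤ r} ≤ muRad n ρc S :=
      le_trans (hamin uS huSunit) (measure_mono huSsub)
    have hμcS : muRad n ρc S ≤ M := by
      rw [hμcapp, hM]
      exact add_le_add (measure_mono (Set.subset_univ S)) hνS
    by_cases hdeg : ∃ w : EuclideanSpace ℝ (Fin n), ‖w‖ = 1 ∧ ∀ i, ⟪a i, w⟫_ℝ ≤ 0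
    · exfalso
      obtain ⟨w, hw1, hwle⟩ := hdeg
      set D : ℕ → Set (EuclideanSpace ℝ (Fin n)) :=
        fun k => Metric.ball ((2*r*((k:ℝ)+1)) • w) r with hD
      have hDsub : ∀ k : ℕ, D k ⊆ {x | ∀ i, ⟪x, a i⟫_ℝ ≤ r} :=
        fun k => tube_subset_T haunit hwle (by positivity)
      have hDA : ∀ k : ℕ, k < K → D k ⊆ Metric.closedBall 0 A := by
        intro k hk x hx
        rw [hD, Metric.mem_ball, dist_eq_norm] at hx
        rw [Metric.mem_closedBall, dist_zero_right]
        have h2 : ‖(2*r*((k:ℝ)+1)) • w‖ = 2*r*((k:ℝ)+1) := by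
          rw [norm_smul, hw1, mul_one, Real.norm_of_nonneg (by positivity)]
        have h4 : ‖x‖ ≤ ‖x - (2*r*((k:ℝ)+1)) • w‖ + ‖(2*r*((k:ℝ)+1)) • w‖ := by
          have h5 := norm_add_le (x - (2*r*((k:ℝ)+1)) • w) ((2*r*((k:ℝ)+1)) • w)
          simpa using h5
        have h3 : ((k:ℝ)+1) ≤ (K:ℝ) := by exact_mod_cast Nat.succ_le_of_lt hk
        rw [h2] at h4
        rw [hA]
        nlinarith [hr]
      have hνD : ∀ k : ℕ, k < K → x₀ ≤ ν (D k) := by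
        intro k hk
        rw [hν, hD, withDensity_apply _ measurableSet_ball]
        have hone : ∀ x ∈ Metric.ball ((2*r*((k:ℝ)+1)) • w) r,
            dens x = ENNReal.ofReal c := by
          intro x hx
          have hxA : ‖x‖ ≤ A := by
            have h6 := hDA k hk (by rwa [hD])
            rwa [Metric.mem_closedBall, dist_zero_right] at h6
          simp only [hdens]
          rw [phiA_eq_one hxA, mul_one]
        rw [setLIntegral_congr_fun measurableSet_ball hone,
          setLIntegral_const, Measure.addHaar_ball_center]
      have hdisj : (↑(Finset.range K) : Set ℕ).PairwiseDisjoint D := by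
        intro k _ j _ hkj
        rw [hD]
        apply Metric.ball_disjoint_ball
        rw [dist_eq_norm, ← sub_smul, norm_smul, hw1, mul_one, Real.norm_eq_abs]
        have h5 : |2*r*((k:ℝ)+1) - 2*r*((j:ℝ)+1)| = 2*r*|(k:ℝ) - (j:ℝ)| := by
          rw [show 2*r*((k:ℝ)+1) - 2*r*((j:ℝ)+1) = (2*r)*((k:ℝ) - (j:ℝ)) by ring,
            abs_mul, abs_of_nonneg (show (0:ℝ) ≤ 2*r by positivity)]
        have h6 : (1:ℝ) ≤ |(k:ℝ) - (j:ℝ)| := by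
          rcases lt_or_gt_of_ne hkj with h | h
          · have h7 : (k:ℝ) + 1 ≤ (j:ℝ) := by exact_mod_cast h
            rw [abs_sub_comm, abs_of_nonneg (by linarith)]
            linarith
          · have h7 : (j:ℝ) + 1 ≤ (k:ℝ) := by exact_mod_cast h
            rw [abs_of_nonneg (by linarith)]
            linarith
        rw [h5]
        nlinarith [hr]
      have hKsum : (K : ℝ≥0∞) * x₀ ≤ ν {x | ∀ i, ⟪x, a i⟫_ℝ ≤ r} := by
        have h7 : (K : ℝ≥0∞) * x₀ = ∑ _k ∈ Finset.range K, x₀ := by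
          rw [Finset.sum_const, Finset.card_range, nsmul_eq_mul]
        rw [h7]
        calc (∑ _k ∈ Finset.range K, x₀) ≤ ∑ k ∈ Finset.range K, ν (D k) :=
              Finset.sum_le_sum fun k hk => hνD k (Finset.mem_range.1 hk)
          _ = ν (⋃ k ∈ Finset.range K, D k) :=
              (measure_biUnion_finset hdisj (fun k _ => measurableSet_ball)).symm
          _ ≤ ν {x | ∀ i, ⟪x, a i⟫_ℝ ≤ r} :=
              measure_mono (Set.iUnion₂_subset fun k _ => hDsub k)
      have hνμc : ν {x | ∀ i, ⟪x, a i⟫_ℝ ≤ r}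
          ≤ muRad n ρc {x | ∀ i, ⟪x, a i⟫_ℝ ≤ r} := by
        rw [hμcapp]; exact le_add_self
      have hfinal : (K:ℝ≥0∞) * x₀ ≤ M :=
        le_trans hKsum (le_trans hνμc (le_trans hTa_le_S hμcS))
      exact absurd hfinal (not_le.2 hKx)
    · push_neg at hdeg
      have hnd : ∀ w : EuclideanSpace ℝ (Fin n), w ≠ 0 → ∃ i, 0 < ⟪a i, w⟫_ℝ := by
        intro w hw
        have hw1 : ‖(‖w‖⁻¹ • w)‖ = 1 := by
          rw [norm_smul, norm_inv, norm_norm, inv_mul_cancel₀ (norm_ne_zero_iff.2 hw)]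
        obtain ⟨i, hi⟩ := hdeg (‖w‖⁻¹ • w) hw1
        refine ⟨i, ?_⟩
        rw [real_inner_smul_right] at hi
        by_contra hle
        push_neg at hle
        have h8 : ‖w‖⁻¹ * ⟪a i, w⟫_ℝ ≤ 0 :=
          mul_nonpos_of_nonneg_of_nonpos (inv_nonneg.2 (norm_nonneg w)) hle
        linarith
      have hsimp := T_isSimplex hr hnd
      have hloc : ∃ ε > 0, ∀ S' : Set (EuclideanSpace ℝ (Fin n)), IsSimplex S' →
          Metric.closedBall 0 r ⊆ S' →
          Metric.hausdorffDist {x | ∀ i, ⟪x, a i⟫_ℝ ≤ r} S' < ε →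
          muRad n ρc {x | ∀ i, ⟪x, a i⟫_ℝ ≤ r} ≤ muRad n ρc S' := by
        refine ⟨1, one_pos, fun S' hS'' hball'' _ => ?_⟩
        obtain ⟨u', hu'unit, hu'sub⟩ := simplex_tangent hn hr hS'' hball''
        exact le_trans (hamin u' hu'unit) (measure_mono hu'sub)
      have hH := H ρc hρcpos hρcanti hintc _ hsimp (ball_subset_T haunit) hloc
      have h1 : muRad n ρ S₀ ≤ muRad n ρc S₀ := by
        rw [hμcapp]; exact self_le_add_right _ _
      have h2 : muRad n ρc S ≤ muRad n ρ S + ENNReal.ofReal c * V := by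
        rw [hμcapp]
        exact add_le_add_right hνS _
      exact le_trans h1 (le_trans hH (le_trans hTa_le_S h2))

  -- epsilon conclusion
  refine ENNReal.le_of_forall_pos_le_add ?_
  intro ε hε hlt
  rcases eq_or_ne V 0 with hV0 | hV0
  · have h1 := key 1 one_pos
    rw [hV0, mul_zero, add_zero] at h1
    exact le_add_right h1
  · set c := (ε : ℝ) / V.toReal with hcdef
    have hVr : 0 < V.toReal := ENNReal.toReal_pos hV0 hVlt.ne
    have hcpos : 0 < c := div_pos (by exact_mod_cast hε) hVr
    have h1 := key c hcpos
    have hcV : ENNReal.ofReal c * V ≤ (ε : ℝ≥0∞) := by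
      conv_lhs => rw [← ENNReal.ofReal_toReal hVlt.ne]
      rw [← ENNReal.ofReal_mul hcpos.le, hcdef, div_mul_cancel₀ _ hVr.ne']
      rw [ENNReal.ofReal_coe_nnreal]
    exact le_trans h1 (add_le_add_right hcV _)
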